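/- Let S₁ and S₂ be commutative semirings (possibly without unit) and Θ a congruence on S₁ × S₂. Then the kernel [(0,0)]Θ is strongly directly decomposable, i.e., [(0,0)]Θ = {a ∈ S₁ | ∃ b c, (a,b) Θ (0,c)} × {e ∈ S₂ | ∃ d f, (d,e) Θ (f,0)}, if and only if for all a,d,f ∈ S₁ and b,c,e ∈ S₂: (a,b) Θ (0,c) and (d,e) Θ (f,0) together imply (a,e) Θ (0,0). -/
import Mathlib


theorem stmt_10 {S₁ S₂ : Type*} [NonUnitalCommSemiring S₁] [NonUnitalCommSemiring S₂]
    (Θ : RingCon (S₁ × S₂)) :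
    ({x : S₁ × S₂ | Θ x (0, 0)} =
        {a : S₁ | ∃ (b c : S₂), Θ (a, b) (0, c)} ×ˢ
          {e : S₂ | ∃ (d f : S₁), Θ (d, e) (f, 0)}) ↔
      (∀ (a d f : S₁) (b c e : S₂),
        Θ (a, b) (0, c) → Θ (d, e) (f, 0) → Θ (a, e) (0, 0)) := by
  constructor
  · intro h a d f b c e h1 h2
    have : (a, e) ∈ ({a : S₁ | ∃ (b c : S₂), Θ (a, b) (0, c)} ×ˢ
        {e : S₂ | ∃ (d f : S₁), Θ (d, e) (f, 0)}) :=
      ⟨⟨b, c, h1⟩, ⟨d, f, h2⟩⟩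
    rw [← h] at this
    exact this
  · intro h
    ext ⟨x, y⟩
    constructor
    · intro hx
      exact ⟨⟨y, 0, hx⟩, ⟨x, 0, hx⟩⟩
    · rintro ⟨⟨b, c, h1⟩, ⟨d, f, h2⟩⟩
      exact h x d f b c y h1 h2
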